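/- For any real Y and pairwise distinct real numbers λ₁,…,λ_{n+1}, ∑_{σ∈S_{n+1}} ∏_{k=1}^{n} (λ_{σ(1)} + λ_{σ(2)} − λ_{σ(k+1)} − Y)/(λ_{σ(k)} − λ_{σ(k+1)}) = 2^{n+1} − n − 2. -/

import Mathlib

open Finset Polynomial


lemma coeff_basis (W : Finset ℝ) (x : ℝ) (hx : x ∈ W) :
    (Lagrange.basis W id x).coeff (W.card - 1) = (∏ t ∈ W.erase x, (x - t))⁻¹ := by
  classical
  have hb : Lagrange.basis W id x
      = C (∏ t ∈ W.erase x, (x - t)⁻¹) * ∏ t ∈ W.erase x, (X - C t) := by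
    rw [Lagrange.basis, map_prod, ← prod_mul_distrib]
    simp [Lagrange.basisDivisor]
  have hQm : (∏ t ∈ W.erase x, (X - C t) : ℝ[X]).Monic :=
    monic_prod_of_monic _ _ fun t _ => monic_X_sub_C t
  have hQd : (∏ t ∈ W.erase x, (X - C t) : ℝ[X]).natDegree = W.card - 1 := by
    rw [natDegree_prod_of_monic _ _ fun t _ => monic_X_sub_C t]
    simp [card_erase_of_mem hx]
  rw [hb, coeff_C_mul, ← hQd, hQm.coeff_natDegree, mul_one, prod_inv_distrib]

lemma lemA (W : Finset ℝ) (p : Polynomial ℝ) (hW : W.Nonempty) (hdeg : p.degree < W.card) :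
    ∑ x ∈ W, p.eval x * (∏ t ∈ W.erase x, (x - t))⁻¹ = p.coeff (W.card - 1) := by
  classical
  have h0 := congrArg (fun q : ℝ[X] => q.coeff (W.card - 1))
    (Lagrange.eq_interpolate (f := p) (Function.injective_id.injOn) (by simpa using hdeg))
  simp only [Lagrange.interpolate_apply, finset_sum_coeff, coeff_C_mul, id] at h0
  rw [h0]
  exact Finset.sum_congr rfl fun x hx => by rw [coeff_basis W x hx]

lemma lemPU (A : Finset ℝ) (hA : A.Nonempty) (v : ℝ) (hv : v ∉ A) :
    ∑ x ∈ A, ((v - x)⁻¹ * (∏ y ∈ A.erase x, (x - y))⁻¹) = (∏ y ∈ A, (v - y))⁻¹ := by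
  classical
  have h0 := congrArg (Polynomial.eval v)
    (Lagrange.sum_basis (s := A) (v := id) Function.injective_id.injOn hA)
  rw [eval_finset_sum, eval_one] at h0
  simp only [Lagrange.basis, eval_prod, Lagrange.basisDivisor, eval_mul, eval_C, eval_sub,
    eval_X, id] at h0
  have key : ∀ x ∈ A, (v - x)⁻¹ * (∏ y ∈ A.erase x, (x - y))⁻¹
      = (∏ y ∈ A, (v - y))⁻¹ * ∏ y ∈ A.erase x, ((x - y)⁻¹ * (v - y)) := by
    intro x hx
    have hvy : ∀ y ∈ A.erase x, v - y ≠ 0 := fun y hy =>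
      sub_ne_zero.2 fun h => hv (h ▸ mem_of_mem_erase hy)
    have hP : (∏ y ∈ A.erase x, (v - y)) ≠ 0 := prod_ne_zero_iff.2 hvy
    have hvx : v - x ≠ 0 := sub_ne_zero.2 fun h => hv (h ▸ hx)
    have hQ : (∏ y ∈ A.erase x, (x - y)) ≠ 0 :=
      prod_ne_zero_iff.2 fun y hy => sub_ne_zero.2 (Ne.symm (mem_erase.1 hy).1)
    rw [← Finset.mul_prod_erase A _ hx, prod_mul_distrib, mul_inv, prod_inv_distrib]
    field_simp
  rw [Finset.sum_congr rfl key, ← mul_sum, h0, mul_one]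


noncomputable def ch {N : ℕ} (v : ℝ) (w : Fin N → ℝ) : ℝ :=
  ∏ k : Fin N, ((Fin.cons v w : Fin (N+1) → ℝ) k.castSucc - w k)⁻¹

lemma ch_succ {N : ℕ} (v : ℝ) (w : Fin (N+1) → ℝ) :
    ch v w = (v - w 0)⁻¹ * ch (w 0) (w ∘ Fin.succ) := by
  have h : (Fin.cons (w 0) (w ∘ Fin.succ) : Fin (N+1) → ℝ) = w := by
    funext j
    refine Fin.cases ?_ ?_ j <;> simp
  rw [ch, ch, Fin.prod_univ_succ, h]
  simp only [Fin.castSucc_zero, Fin.cons_zero]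
  congr 1

lemma image_swap_succ {N : ℕ} (p : Fin (N+1)) :
    Finset.image (Equiv.swap 0 p ∘ Fin.succ) (Finset.univ : Finset (Fin N)) =
      Finset.univ.erase p := by
  apply Finset.eq_of_subset_of_card_le
  · intro j hj
    simp only [Finset.mem_image] at hj
    obtain ⟨k, -, rfl⟩ := hj
    refine Finset.mem_erase.2 ⟨fun h => ?_, Finset.mem_univ _⟩
    have := (Equiv.swap 0 p).injective (h.trans (Equiv.swap_apply_left 0 p).symm)
    exact Fin.succ_ne_zero k this
  · rw [Finset.card_erase_of_mem (Finset.mem_univ _), Finset.card_image_of_injective _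
      ((Equiv.swap 0 p).injective.comp (Fin.succ_injective N))]
    simp

lemma Hsum {N : ℕ} : ∀ (v : ℝ) (b : Fin N → ℝ), Function.Injective b → (∀ k, v ≠ b k) →
    ∑ e : Equiv.Perm (Fin N), ch v (b ∘ e) = (∏ k, (v - b k))⁻¹ := by
  induction N with
  | zero => intro v b _ _; simp [ch]
  | succ N IH =>
    intro v b hb hv
    rw [← Equiv.sum_comp (Equiv.Perm.decomposeFin).symm, Fintype.sum_prod_type]
    have hterm : ∀ (p : Fin (N+1)) (e : Equiv.Perm (Fin N)),
        ch v (b ∘ (Equiv.Perm.decomposeFin.symm (p, e) : Equiv.Perm (Fin (N+1)))) =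
        (v - b p)⁻¹ * ch (b p) ((b ∘ Equiv.swap 0 p ∘ Fin.succ) ∘ e) := by
      intro p e
      rw [ch_succ]
      have h0 : (b ∘ (Equiv.Perm.decomposeFin.symm (p, e) : Equiv.Perm (Fin (N+1)))) 0 = b p := by
        simp [Equiv.Perm.decomposeFin_symm_apply_zero]
      rw [h0]
      have h1 : (b ∘ (Equiv.Perm.decomposeFin.symm (p, e) : Equiv.Perm (Fin (N+1)))) ∘ Fin.succ
          = (b ∘ Equiv.swap 0 p ∘ Fin.succ) ∘ e := by
        funext i
        simp [Equiv.Perm.decomposeFin_symm_apply_succ]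
      rw [h1]
    simp_rw [hterm]
    have hinner : ∀ p : Fin (N+1),
        ∑ e : Equiv.Perm (Fin N), ch (b p) ((b ∘ Equiv.swap 0 p ∘ Fin.succ) ∘ e)
        = (∏ k, (b p - (b ∘ Equiv.swap 0 p ∘ Fin.succ) k))⁻¹ := by
      intro p
      refine IH _ _ (hb.comp ((Equiv.swap 0 p).injective.comp (Fin.succ_injective N))) ?_
      intro k h
      have h2 : Equiv.swap 0 p 0 = Equiv.swap 0 p k.succ := by
        rw [Equiv.swap_apply_left]; exact hb h
      exact Fin.succ_ne_zero k ((Equiv.swap 0 p).injective h2).symm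
    simp_rw [← Finset.mul_sum, hinner]
    -- now convert to value form
    set A : Finset ℝ := Finset.image b Finset.univ with hAdef
    have hprodp : ∀ p : Fin (N+1),
        (∏ k, (b p - (b ∘ Equiv.swap 0 p ∘ Fin.succ) k)) = ∏ y ∈ A.erase (b p), (b p - y) := by
      intro p
      rw [← Finset.prod_image (f := fun y => b p - y)
        (g := b ∘ Equiv.swap 0 p ∘ Fin.succ) (by
          intro x _ y _ h
          exact ((Equiv.swap 0 p).injective.comp (Fin.succ_injective N)) (hb h))]
      congr 1
      rw [show b ∘ Equiv.swap 0 p ∘ Fin.succ = b ∘ (Equiv.swap 0 p ∘ Fin.succ) from rfl,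
        ← Finset.image_image, image_swap_succ, Finset.image_erase hb]
    simp_rw [hprodp]
    have hRHS : (∏ k, (v - b k)) = ∏ y ∈ A, (v - y) := by
      rw [Finset.prod_image (fun x _ y _ h => hb h)]
    rw [hRHS]
    have hsum : ∑ x : Fin (N+1), ((v - b x)⁻¹ * (∏ y ∈ A.erase (b x), (b x - y))⁻¹)
        = ∑ y ∈ A, ((v - y)⁻¹ * (∏ z ∈ A.erase y, (y - z))⁻¹) := by
      rw [hAdef]
      exact (Finset.sum_image
        (f := fun z => (v - z)⁻¹ * (∏ y ∈ (Finset.image b Finset.univ).erase z, (z - y))⁻¹) (g := b)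
        (fun x _ y _ h => hb h)).symm
    rw [hsum]
    exact lemPU A ⟨b 0, Finset.mem_image.2 ⟨0, Finset.mem_univ _, rfl⟩⟩ v
      (fun hmem => by
        obtain ⟨k, -, hk⟩ := Finset.mem_image.1 hmem
        exact hv k hk.symm)


lemma lemII (A : Finset ℝ) (x : ℝ) (hx : x ∈ A) :
    ∑ y ∈ A.erase x, x * (x - y)⁻¹ * ∏ t ∈ (A.erase x).erase y, ((x + y - t) * (y - t)⁻¹)
    = ∏ t ∈ A.erase x, ((2*x - t) * (x - t)⁻¹) - 1 := by
  classical
  set p : Polynomial ℝ := ∏ t ∈ A.erase x, (X + C (x - t)) with hp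
  have hmon : p.Monic := monic_prod_of_monic _ _ fun t _ => monic_X_add_C _
  have hnd : p.natDegree = A.card - 1 := by
    rw [hp, natDegree_prod_of_monic _ _ fun t _ => monic_X_add_C _]
    simp only [natDegree_X_add_C, Finset.sum_const, smul_eq_mul, mul_one, card_erase_of_mem hx]
  have hcard : 0 < A.card := card_pos.2 ⟨x, hx⟩
  have hdeg : p.degree < A.card := by
    rw [degree_eq_natDegree hmon.ne_zero, hnd]
    exact_mod_cast Nat.cast_lt.2 (Nat.sub_lt hcard one_pos)
  have key := lemA A p ⟨x, hx⟩ hdeg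
  rw [← Finset.add_sum_erase A _ hx] at key
  have hcoeff : p.coeff (A.card - 1) = 1 := by
    rw [← hnd]; exact hmon.coeff_natDegree
  rw [hcoeff] at key
  have hevalx : p.eval x * (∏ t ∈ A.erase x, (x - t))⁻¹
      = ∏ t ∈ A.erase x, ((2*x - t) * (x - t)⁻¹) := by
    rw [hp, eval_prod, ← prod_inv_distrib, ← prod_mul_distrib]
    exact prod_congr rfl fun t _ => by simp only [eval_add, eval_X, eval_C]; ring_nf
  rw [hevalx] at key
  have hterm : ∀ y ∈ A.erase x, p.eval y * (∏ t ∈ A.erase y, (y - t))⁻¹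
      = -(x * (x - y)⁻¹ * ∏ t ∈ (A.erase x).erase y, ((x + y - t) * (y - t)⁻¹)) := by
    intro y hy
    obtain ⟨hyx, hyA⟩ := mem_erase.1 hy
    have hxy : x ∈ A.erase y := mem_erase.2 ⟨fun h => hyx h.symm, hx⟩
    have e1 : p.eval y = x * ∏ t ∈ (A.erase x).erase y, (x + y - t) := by
      rw [hp, eval_prod, ← Finset.mul_prod_erase _ _ hy]
      simp only [eval_add, eval_X, eval_C]
      rw [show y + (x - y) = x by ring]
      congr 1
      exact prod_congr rfl fun t _ => by ring
    have e2 : (∏ t ∈ A.erase y, (y - t)) = (y - x) * ∏ t ∈ (A.erase x).erase y, (y - t) := by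
      rw [← Finset.mul_prod_erase _ _ hxy, Finset.erase_right_comm]
    rw [e1, e2, mul_inv, show (y - x) = -(x - y) by ring, inv_neg, prod_mul_distrib,
      prod_inv_distrib]
    ring
  rw [Finset.sum_congr rfl hterm, Finset.sum_neg_distrib] at key
  linarith [key]

lemma lemIII (A : Finset ℝ) :
    ∑ x ∈ A, ∏ t ∈ A.erase x, ((2*x - t) * (x - t)⁻¹) = 2^A.card - 1 := by
  classical
  have hexp : ∀ x ∈ A, ∏ t ∈ A.erase x, ((2*x - t) * (x - t)⁻¹)
      = ∑ S ∈ (A.erase x).powerset, ∏ t ∈ S, (x * (x - t)⁻¹) := by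
    intro x hx
    have h1 : ∀ t ∈ A.erase x, (2*x - t) * (x - t)⁻¹ = x * (x - t)⁻¹ + 1 := by
      intro t ht
      have h : x - t ≠ 0 := sub_ne_zero.2 (Ne.symm (mem_erase.1 ht).1)
      field_simp
      ring
    rw [prod_congr rfl h1, Finset.prod_add]
    exact sum_congr rfl fun S hS => by rw [prod_const_one, mul_one]
  rw [Finset.sum_congr rfl hexp]
  have regroup : ∑ x ∈ A, ∑ S ∈ (A.erase x).powerset, ∏ t ∈ S, (x * (x - t)⁻¹)
      = ∑ W ∈ A.powerset.filter (·.Nonempty), ∑ x ∈ W, ∏ t ∈ W.erase x, (x * (x - t)⁻¹) := by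
    rw [Finset.sum_sigma', Finset.sum_sigma']
    refine Finset.sum_nbij' (i := fun q => (⟨insert q.1 q.2, q.1⟩ : Σ _ : Finset ℝ, ℝ))
      (j := fun q => (⟨q.2, q.1.erase q.2⟩ : Σ _ : ℝ, Finset ℝ)) ?_ ?_ ?_ ?_ ?_
    · rintro ⟨x, S⟩ hq
      rw [Finset.mem_sigma] at hq
      obtain ⟨hxA, hS⟩ := hq
      rw [Finset.mem_powerset] at hS
      refine Finset.mem_sigma.2 ⟨Finset.mem_filter.2 ⟨Finset.mem_powerset.2 ?_, ?_⟩, ?_⟩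
      · exact Finset.insert_subset hxA (hS.trans (Finset.erase_subset _ _))
      · exact Finset.insert_nonempty _ _
      · exact Finset.mem_insert_self _ _
    · rintro ⟨W, x⟩ hq
      rw [Finset.mem_sigma] at hq
      obtain ⟨hW, hxW⟩ := hq
      obtain ⟨hWA, -⟩ := Finset.mem_filter.1 hW
      rw [Finset.mem_powerset] at hWA
      refine Finset.mem_sigma.2 ⟨hWA hxW, Finset.mem_powerset.2 ?_⟩
      exact Finset.erase_subset_erase _ hWA
    · rintro ⟨x, S⟩ hq
      rw [Finset.mem_sigma] at hq
      obtain ⟨hxA, hS⟩ := hq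
      rw [Finset.mem_powerset] at hS
      have hxS : x ∉ S := fun h => Finset.notMem_erase x A (hS h)
      simp [Finset.erase_insert hxS]
    · rintro ⟨W, x⟩ hq
      rw [Finset.mem_sigma] at hq
      obtain ⟨hW, hxW⟩ := hq
      simp [Finset.insert_erase hxW]
    · rintro ⟨x, S⟩ hq
      rw [Finset.mem_sigma] at hq
      obtain ⟨hxA, hS⟩ := hq
      rw [Finset.mem_powerset] at hS
      have hxS : x ∉ S := fun h => Finset.notMem_erase x A (hS h)
      simp [Finset.erase_insert hxS]
  rw [regroup]
  have inner : ∀ W ∈ A.powerset.filter (·.Nonempty),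
      ∑ x ∈ W, ∏ t ∈ W.erase x, (x * (x - t)⁻¹) = 1 := by
    intro W hW
    obtain ⟨-, hWne⟩ := Finset.mem_filter.1 hW
    have hcard : 0 < W.card := card_pos.2 hWne
    have key := lemA W (X ^ (W.card - 1)) hWne (by
      rw [degree_X_pow]
      exact_mod_cast Nat.cast_lt.2 (Nat.sub_lt hcard one_pos))
    rw [coeff_X_pow, if_pos rfl] at key
    rw [← key]
    refine sum_congr rfl fun x hxW => ?_
    rw [prod_mul_distrib, prod_const, ← prod_inv_distrib, card_erase_of_mem hxW, eval_pow, eval_X]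
  rw [Finset.sum_congr rfl inner, Finset.sum_const, nsmul_eq_mul, mul_one]
  have hfil : A.powerset.filter (·.Nonempty) = A.powerset.erase ∅ := by
    ext S
    simp [Finset.nonempty_iff_ne_empty, and_comm]
  rw [hfil, card_erase_of_mem (Finset.empty_mem_powerset A), card_powerset]
  have h2 : 1 ≤ 2 ^ A.card := Nat.one_le_two_pow
  push_cast [h2]
  ring


lemma swap_succ_ne {N : ℕ} (p : Fin (N+1)) (k : Fin N) : Equiv.swap 0 p k.succ ≠ p := by
  intro h
  have := (Equiv.swap 0 p).injective (h.trans (Equiv.swap_apply_left 0 p).symm)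
  exact Fin.succ_ne_zero k this

lemma image_comp_swap {N : ℕ} (b : Fin (N+1) → ℝ) (hb : Function.Injective b) (p : Fin (N+1)) :
    Finset.image (b ∘ Equiv.swap 0 p ∘ Fin.succ) Finset.univ
      = (Finset.image b Finset.univ).erase (b p) := by
  rw [show b ∘ Equiv.swap 0 p ∘ Fin.succ = b ∘ (Equiv.swap 0 p ∘ Fin.succ) from rfl,
    ← Finset.image_image, image_swap_succ, Finset.image_erase hb]

theorem stmt11 (n : ℕ) (hn : 1 ≤ n) (Y : ℝ) (l : Fin (n+1) → ℝ)
    (hl : Function.Injective l) :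
    ∑ σ : Equiv.Perm (Fin (n+1)), ∏ k : Fin n,
      (l (σ 0) + l (σ 1) - l (σ k.succ) - Y) / (l (σ k.castSucc) - l (σ k.succ))
    = 2^(n+1) - n - 2 := by
  classical
  obtain ⟨m, rfl⟩ : ∃ m, n = m + 1 := ⟨n - 1, (Nat.succ_pred_eq_of_pos hn).symm⟩
  set a : Fin (m+2) → ℝ := fun j => l j - Y with ha
  have haval : ∀ j, a j = l j - Y := fun j => rfl
  have hainj : Function.Injective a := by
    intro i j h
    apply hl
    have h2 : l i - Y = l j - Y := h
    linarith
  set A : Finset ℝ := Finset.image a Finset.univ with hA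
  have hAcard : A.card = m + 2 := by
    rw [hA, Finset.card_image_of_injective _ hainj, Finset.card_univ, Fintype.card_fin]
  -- Step 1: rewrite each summand
  have step1 : ∀ σ : Equiv.Perm (Fin (m+2)),
      (∏ k : Fin (m+1), (l (σ 0) + l (σ 1) - l (σ k.succ) - Y) /
        (l (σ k.castSucc) - l (σ k.succ)))
      = (∏ k : Fin (m+1), (a (σ 0) + a (σ 1) - a (σ k.succ)))
          * ch (a (σ 0)) (fun i => a (σ i.succ)) := by
    intro σ
    rw [ch]
    have hcons : (Fin.cons (a (σ 0)) (fun i => a (σ i.succ)) : Fin (m+2) → ℝ)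
        = fun j => a (σ j) := by
      funext j
      refine Fin.cases ?_ ?_ j <;> simp
    rw [hcons, ← Finset.prod_mul_distrib]
    refine Finset.prod_congr rfl fun k _ => ?_
    rw [div_eq_mul_inv]
    congr 1
    · rw [haval, haval, haval]; ring
    · congr 1
      show l (σ k.castSucc) - l (σ k.succ) = a (σ k.castSucc) - a (σ k.succ)
      rw [haval, haval]; ring
  rw [Finset.sum_congr rfl (fun σ _ => step1 σ)]
  -- Step 2: first peeling
  rw [← Equiv.sum_comp (Equiv.Perm.decomposeFin).symm
    (fun σ : Equiv.Perm (Fin (m+2)) =>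
      (∏ k : Fin (m+1), (a (σ 0) + a (σ 1) - a (σ k.succ)))
        * ch (a (σ 0)) (fun i => a (σ i.succ))), Fintype.sum_prod_type]
  have step2 : ∀ (p : Fin (m+2)) (e : Equiv.Perm (Fin (m+1))),
      (∏ k : Fin (m+1), (a ((Equiv.Perm.decomposeFin.symm (p, e)) 0)
          + a ((Equiv.Perm.decomposeFin.symm (p, e)) 1)
          - a ((Equiv.Perm.decomposeFin.symm (p, e)) k.succ)))
        * ch (a ((Equiv.Perm.decomposeFin.symm (p, e)) 0))
            (fun i => a ((Equiv.Perm.decomposeFin.symm (p, e)) i.succ))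
      = (∏ j : Fin (m+1), (a p + (a ∘ Equiv.swap 0 p ∘ Fin.succ) (e 0)
          - (a ∘ Equiv.swap 0 p ∘ Fin.succ) j))
          * ch (a p) ((a ∘ Equiv.swap 0 p ∘ Fin.succ) ∘ e) := by
    intro p e
    have h0 : (Equiv.Perm.decomposeFin.symm (p, e)) 0 = p :=
      Equiv.Perm.decomposeFin_symm_apply_zero p e
    have hsucc : ∀ k : Fin (m+1), a ((Equiv.Perm.decomposeFin.symm (p, e)) k.succ)
        = (a ∘ Equiv.swap 0 p ∘ Fin.succ) (e k) := by
      intro k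
      simp [Equiv.Perm.decomposeFin_symm_apply_succ]
    have h1 : a ((Equiv.Perm.decomposeFin.symm (p, e)) 1)
        = (a ∘ Equiv.swap 0 p ∘ Fin.succ) (e 0) := by
      rw [← Fin.succ_zero_eq_one]
      exact hsucc 0
    have hfun : (fun i => a ((Equiv.Perm.decomposeFin.symm (p, e)) i.succ))
        = (a ∘ Equiv.swap 0 p ∘ Fin.succ) ∘ e := funext hsucc
    rw [h0, h1, hfun]
    congr 1
    rw [Finset.prod_congr rfl (fun k _ => by rw [hsucc k] :
      ∀ k ∈ Finset.univ, a p + (a ∘ Equiv.swap 0 p ∘ Fin.succ) (e 0)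
        - a ((Equiv.Perm.decomposeFin.symm (p, e)) k.succ)
      = a p + (a ∘ Equiv.swap 0 p ∘ Fin.succ) (e 0) - (a ∘ Equiv.swap 0 p ∘ Fin.succ) (e k))]
    exact Equiv.prod_comp e (fun j => a p + (a ∘ Equiv.swap 0 p ∘ Fin.succ) (e 0)
      - (a ∘ Equiv.swap 0 p ∘ Fin.succ) j)
  rw [Finset.sum_congr rfl (fun p _ => Finset.sum_congr rfl (fun e _ => step2 p e))]
  -- Step 3: second peeling, per p
  have step3 : ∀ p : Fin (m+2),
      ∑ e : Equiv.Perm (Fin (m+1)),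
        (∏ j : Fin (m+1), (a p + (a ∘ Equiv.swap 0 p ∘ Fin.succ) (e 0)
            - (a ∘ Equiv.swap 0 p ∘ Fin.succ) j))
          * ch (a p) ((a ∘ Equiv.swap 0 p ∘ Fin.succ) ∘ e)
      = ∑ q : Fin (m+1),
        (∏ j : Fin (m+1), (a p + (a ∘ Equiv.swap 0 p ∘ Fin.succ) q
            - (a ∘ Equiv.swap 0 p ∘ Fin.succ) j))
          * ((a p - (a ∘ Equiv.swap 0 p ∘ Fin.succ) q)⁻¹
            * (∏ i : Fin m, ((a ∘ Equiv.swap 0 p ∘ Fin.succ) q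
              - ((a ∘ Equiv.swap 0 p ∘ Fin.succ) ∘ Equiv.swap 0 q ∘ Fin.succ) i))⁻¹) := by
    intro p
    set B : Fin (m+1) → ℝ := a ∘ Equiv.swap 0 p ∘ Fin.succ with hB
    have hBinj : Function.Injective B :=
      hainj.comp ((Equiv.swap 0 p).injective.comp (Fin.succ_injective _))
    rw [← Equiv.sum_comp (Equiv.Perm.decomposeFin).symm
      (fun e : Equiv.Perm (Fin (m+1)) =>
        (∏ j : Fin (m+1), (a p + B (e 0) - B j)) * ch (a p) (B ∘ e)), Fintype.sum_prod_type]
    refine Finset.sum_congr rfl fun q _ => ?_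
    have he0 : ∀ g : Equiv.Perm (Fin m), (Equiv.Perm.decomposeFin.symm (q, g)) 0 = q :=
      fun g => Equiv.Perm.decomposeFin_symm_apply_zero q g
    have hterm : ∀ g : Equiv.Perm (Fin m),
        (∏ j : Fin (m+1), (a p + B ((Equiv.Perm.decomposeFin.symm (q, g)) 0) - B j))
          * ch (a p) (B ∘ (Equiv.Perm.decomposeFin.symm (q, g)))
        = (∏ j : Fin (m+1), (a p + B q - B j))
          * ((a p - B q)⁻¹ * ch (B q) ((B ∘ Equiv.swap 0 q ∘ Fin.succ) ∘ g)) := by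
      intro g
      rw [he0 g]
      congr 1
      rw [ch_succ]
      have hw0 : (B ∘ (Equiv.Perm.decomposeFin.symm (q, g))) 0 = B q := by
        show B ((Equiv.Perm.decomposeFin.symm (q, g)) 0) = B q
        rw [he0 g]
      have h1 : (B ∘ (Equiv.Perm.decomposeFin.symm (q, g))) ∘ Fin.succ
          = (B ∘ Equiv.swap 0 q ∘ Fin.succ) ∘ g := by
        funext i
        simp [Equiv.Perm.decomposeFin_symm_apply_succ, hB]
      rw [hw0, h1]
    rw [Finset.sum_congr rfl (fun g _ => hterm g), ← Finset.mul_sum, ← Finset.mul_sum]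
    congr 2
    refine Hsum (B q) (B ∘ Equiv.swap 0 q ∘ Fin.succ)
      (hBinj.comp ((Equiv.swap 0 q).injective.comp (Fin.succ_injective _))) ?_
    intro k h
    exact (swap_succ_ne q k) (hBinj h).symm
  rw [Finset.sum_congr rfl (fun p _ => step3 p)]
  -- Step 4: convert to sums over value Finsets
  have step4 : ∀ p : Fin (m+2),
      ∑ q : Fin (m+1),
        (∏ j : Fin (m+1), (a p + (a ∘ Equiv.swap 0 p ∘ Fin.succ) q
            - (a ∘ Equiv.swap 0 p ∘ Fin.succ) j))
          * ((a p - (a ∘ Equiv.swap 0 p ∘ Fin.succ) q)⁻¹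
            * (∏ i : Fin m, ((a ∘ Equiv.swap 0 p ∘ Fin.succ) q
              - ((a ∘ Equiv.swap 0 p ∘ Fin.succ) ∘ Equiv.swap 0 q ∘ Fin.succ) i))⁻¹)
      = ∑ y ∈ A.erase (a p),
        (∏ t ∈ A.erase (a p), (a p + y - t))
          * ((a p - y)⁻¹ * (∏ t ∈ (A.erase (a p)).erase y, (y - t))⁻¹) := by
    intro p
    set B : Fin (m+1) → ℝ := a ∘ Equiv.swap 0 p ∘ Fin.succ with hB
    have hBinj : Function.Injective B :=
      hainj.comp ((Equiv.swap 0 p).injective.comp (Fin.succ_injective _))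
    have hBim : Finset.image B Finset.univ = A.erase (a p) := by
      rw [hB, hA]; exact image_comp_swap a hainj p
    have hq : ∀ q : Fin (m+1),
        (∏ j : Fin (m+1), (a p + B q - B j))
          * ((a p - B q)⁻¹ * (∏ i : Fin m, (B q - (B ∘ Equiv.swap 0 q ∘ Fin.succ) i))⁻¹)
        = (∏ t ∈ A.erase (a p), (a p + B q - t))
          * ((a p - B q)⁻¹ * (∏ t ∈ (A.erase (a p)).erase (B q), (B q - t))⁻¹) := by
      intro q
      have hp1 : (∏ t ∈ A.erase (a p), (a p + B q - t)) = ∏ j : Fin (m+1), (a p + B q - B j) := by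
        rw [← hBim, Finset.prod_image (fun x _ y _ h => hBinj h)]
      have hDim : Finset.image (B ∘ Equiv.swap 0 q ∘ Fin.succ) Finset.univ
          = (A.erase (a p)).erase (B q) := by
        rw [← hBim]; exact image_comp_swap B hBinj q
      have hp2 : (∏ t ∈ (A.erase (a p)).erase (B q), (B q - t))
          = ∏ i : Fin m, (B q - (B ∘ Equiv.swap 0 q ∘ Fin.succ) i) := by
        rw [← hDim, Finset.prod_image (fun x _ y _ h =>
          (hBinj.comp ((Equiv.swap 0 q).injective.comp (Fin.succ_injective _))) h)]
      rw [hp1, hp2]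
    have hsi := Finset.sum_image (f := fun y => (∏ t ∈ A.erase (a p), (a p + y - t))
      * ((a p - y)⁻¹ * (∏ t ∈ (A.erase (a p)).erase y, (y - t))⁻¹))
      (g := B) (s := Finset.univ) (fun x _ y _ h => hBinj h)
    rw [hBim] at hsi
    rw [Finset.sum_congr rfl (fun q _ => hq q)]
    exact hsi.symm
  rw [Finset.sum_congr rfl (fun p _ => step4 p)]
  -- Step 5: outer sum over values
  have step5 : ∑ p : Fin (m+2), (∑ y ∈ A.erase (a p),
        (∏ t ∈ A.erase (a p), (a p + y - t))
          * ((a p - y)⁻¹ * (∏ t ∈ (A.erase (a p)).erase y, (y - t))⁻¹))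
      = ∑ x ∈ A, ∑ y ∈ A.erase x,
        (∏ t ∈ A.erase x, (x + y - t))
          * ((x - y)⁻¹ * (∏ t ∈ (A.erase x).erase y, (y - t))⁻¹) := by
    rw [hA]
    exact (Finset.sum_image (f := fun x => ∑ y ∈ (Finset.image a Finset.univ).erase x,
      (∏ t ∈ (Finset.image a Finset.univ).erase x, (x + y - t))
        * ((x - y)⁻¹ * (∏ t ∈ ((Finset.image a Finset.univ).erase x).erase y, (y - t))⁻¹))
      (g := a) (fun x _ y _ h => hainj h)).symm
  rw [step5]
  -- Step 6: massage to lemII form and finish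
  have step6 : ∀ x ∈ A, ∑ y ∈ A.erase x,
      (∏ t ∈ A.erase x, (x + y - t))
        * ((x - y)⁻¹ * (∏ t ∈ (A.erase x).erase y, (y - t))⁻¹)
      = ∏ t ∈ A.erase x, ((2*x - t) * (x - t)⁻¹) - 1 := by
    intro x hx
    rw [← lemII A x hx]
    refine Finset.sum_congr rfl fun y hy => ?_
    have hnum : (∏ t ∈ A.erase x, (x + y - t))
        = x * ∏ t ∈ (A.erase x).erase y, (x + y - t) := by
      rw [← Finset.mul_prod_erase _ _ hy]
      congr 1
      ring
    rw [hnum, Finset.prod_mul_distrib, prod_inv_distrib]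
    ring
  rw [Finset.sum_congr rfl step6, Finset.sum_sub_distrib, lemIII A, Finset.sum_const,
    nsmul_eq_mul, mul_one, hAcard]
  push_cast
  ring
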